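/- For every positive integer n, the ratio B_{2n-1}(t)/B_{2n+1}(t) of Bernoulli polynomials is strictly increasing in t on the open interval (0, 1/2) and strictly decreasing on (1/2, 1). -/

import Mathlib

open Set Real Filter

noncomputable def B (n : ℕ) (t : ℝ) : ℝ := Polynomial.aeval t (Polynomial.bernoulli n)

noncomputable def Bnum (n : ℕ) : ℝ := ((bernoulli n : ℚ) : ℝ)

open MeasureTheory intervalIntegral

lemma B_eq_eval_map (n : ℕ) (t : ℝ) :
    B n t = ((Polynomial.bernoulli n).map (algebraMap ℚ ℝ)).eval t := by
  simp [B, Polynomial.aeval_def, Polynomial.eval_map]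

lemma continuous_B (n : ℕ) : Continuous (B n) := by
  simp only [funext (B_eq_eval_map n)]
  exact Polynomial.continuous _

lemma hasDerivAt_B (n : ℕ) (t : ℝ) : HasDerivAt (B n) ((n : ℝ) * B (n - 1) t) t := by
  simp only [funext (B_eq_eval_map n), B_eq_eval_map]
  have := Polynomial.hasDerivAt ((Polynomial.bernoulli n).map (algebraMap ℚ ℝ)) t
  refine this.congr_deriv ?_
  rw [Polynomial.derivative_map, Polynomial.derivative_bernoulli n]
  push_cast
  simp [Polynomial.eval_map]

lemma B_zero_eval (m : ℕ) : B m 0 = ((bernoulli m : ℚ) : ℝ) := by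
  rw [B_eq_eval_map, Polynomial.eval_zero_map, Polynomial.bernoulli_eval_zero, eq_ratCast]

lemma B_odd_zero {m : ℕ} (h : Odd m) (hm : 1 < m) : B m 0 = 0 := by
  rw [B_zero_eval]
  have : bernoulli m = 0 := by
    rw [bernoulli_eq_bernoulli'_of_ne_one (by omega), bernoulli'_eq_zero_of_odd h hm]
  simp [this]

lemma bernoulli_comp_one_sub (n : ℕ) :
    (Polynomial.bernoulli n).comp (1 - Polynomial.X) =
      Polynomial.C ((-1 : ℚ) ^ n) * Polynomial.bernoulli n := by
  induction n with
  | zero => simp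
  | succ n ih =>
    have hd : Polynomial.derivative ((Polynomial.bernoulli (n+1)).comp (1 - Polynomial.X)) =
        Polynomial.derivative (Polynomial.C ((-1 : ℚ) ^ (n+1)) * Polynomial.bernoulli (n+1)) := by
      rw [Polynomial.derivative_comp, Polynomial.derivative_bernoulli_add_one,
        Polynomial.derivative_mul, Polynomial.derivative_C, Polynomial.derivative_bernoulli_add_one]
      rw [Polynomial.mul_comp, ih]
      simp only [Polynomial.derivative_sub, Polynomial.derivative_one, Polynomial.derivative_X,
        zero_sub, Polynomial.natCast_comp, Polynomial.add_comp, Polynomial.one_comp,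
        pow_succ]
      simp only [Polynomial.C_mul, Polynomial.C_neg, Polynomial.C_1]
      ring
    have h0 : Polynomial.derivative ((Polynomial.bernoulli (n+1)).comp (1 - Polynomial.X) -
        Polynomial.C ((-1 : ℚ) ^ (n+1)) * Polynomial.bernoulli (n+1)) = 0 := by
      rw [Polynomial.derivative_sub, hd, sub_self]
    obtain ⟨c, hc⟩ : ∃ c, (Polynomial.bernoulli (n+1)).comp (1 - Polynomial.X) -
        Polynomial.C ((-1 : ℚ) ^ (n+1)) * Polynomial.bernoulli (n+1) = Polynomial.C c :=
      ⟨_, Polynomial.eq_C_of_derivative_eq_zero h0⟩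
    have he : ((Polynomial.bernoulli (n+1)).comp (1 - Polynomial.X) -
        Polynomial.C ((-1 : ℚ) ^ (n+1)) * Polynomial.bernoulli (n+1)).eval 1 = 0 := by
      simp only [Polynomial.eval_sub, Polynomial.eval_comp, Polynomial.eval_sub,
        Polynomial.eval_one, Polynomial.eval_X, sub_self, Polynomial.bernoulli_eval_zero,
        Polynomial.eval_mul, Polynomial.eval_C, Polynomial.bernoulli_eval_one]
      rw [bernoulli]
      ring
    rw [hc] at he
    simp only [Polynomial.eval_C] at he
    rw [he, map_zero] at hc
    exact sub_eq_zero.mp hc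

lemma B_one_sub (m : ℕ) (t : ℝ) : B m (1 - t) = (-1) ^ m * B m t := by
  have h := congrArg (Polynomial.aeval t) (bernoulli_comp_one_sub m)
  rw [Polynomial.aeval_comp, map_mul, Polynomial.aeval_C] at h
  simp only [map_sub, Polynomial.aeval_one, Polynomial.aeval_X] at h
  rw [B, B, h]
  push_cast
  ring

lemma B_odd_half {m : ℕ} (h : Odd m) : B m (1/2) = 0 := by
  have := B_one_sub m (1/2)
  rw [show (1:ℝ) - 1/2 = 1/2 by norm_num, Odd.neg_one_pow h] at this
  linarith

lemma bernoulli_coeff_self (n : ℕ) : (Polynomial.bernoulli n).coeff n = 1 := by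
  rw [Polynomial.bernoulli, Polynomial.finset_sum_coeff]
  rw [Finset.sum_eq_single 0]
  · simp [Polynomial.coeff_monomial]
  · intro i hi h0
    rw [Finset.mem_range] at hi
    rw [Polynomial.coeff_monomial, if_neg (by omega)]
  · intro h
    simp at h

lemma bernoulli_coeff_eq_zero {n k : ℕ} (h : n < k) : (Polynomial.bernoulli n).coeff k = 0 := by
  rw [Polynomial.bernoulli, Polynomial.finset_sum_coeff]
  apply Finset.sum_eq_zero
  intro i hi
  rw [Polynomial.coeff_monomial, if_neg (by omega)]

noncomputable def Kf (g : ℝ → ℝ) (t : ℝ) : ℝ :=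
  (1 - 2*t) * (∫ s in (0:ℝ)..t, s * g s) + t * (∫ s in t..(1/2:ℝ), (1 - 2*s) * g s)

noncomputable def Kd (g : ℝ → ℝ) (t : ℝ) : ℝ :=
  (-2) * (∫ s in (0:ℝ)..t, s * g s) + (∫ s in t..(1/2:ℝ), (1 - 2*s) * g s)

lemma cont1 {g : ℝ → ℝ} (hg : Continuous g) : Continuous (fun s : ℝ => s * g s) :=
  continuous_id.mul hg

lemma cont2 {g : ℝ → ℝ} (hg : Continuous g) : Continuous (fun s : ℝ => (1 - 2*s) * g s) :=
  (continuous_const.sub (continuous_const.mul continuous_id)).mul hg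

lemma hd_right {g : ℝ → ℝ} (hg : Continuous g) (t : ℝ) :
    HasDerivAt (fun u => ∫ s in (0:ℝ)..u, s * g s) (t * g t) t :=
  integral_hasDerivAt_right ((cont1 hg).intervalIntegrable _ _)
    ((cont1 hg).stronglyMeasurableAtFilter _ _) (cont1 hg).continuousAt

lemma hd_left {g : ℝ → ℝ} (hg : Continuous g) (t : ℝ) :
    HasDerivAt (fun u => ∫ s in u..(1/2:ℝ), (1 - 2*s) * g s) (-((1 - 2*t) * g t)) t := by
  have := integral_hasDerivAt_left ((cont2 hg).intervalIntegrable t (1/2))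
    ((cont2 hg).stronglyMeasurableAtFilter MeasureTheory.volume (nhds t)) (cont2 hg).continuousAt
  simpa using this

lemma hasDerivAt_Kf {g : ℝ → ℝ} (hg : Continuous g) (t : ℝ) :
    HasDerivAt (Kf g) (Kd g t) t := by
  have h1 := hd_right hg t
  have h2 := hd_left hg t
  have hA : HasDerivAt (fun u => (1 - 2*u) * (∫ s in (0:ℝ)..u, s * g s))
      ((-2) * (∫ s in (0:ℝ)..t, s * g s) + (1 - 2*t) * (t * g t)) t := by
    have := ((hasDerivAt_const t (1:ℝ)).sub ((hasDerivAt_id t).const_mul 2)).mul h1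
    refine this.congr_deriv ?_
    simp
  have hB : HasDerivAt (fun u => u * (∫ s in u..(1/2:ℝ), (1 - 2*s) * g s))
      ((∫ s in t..(1/2:ℝ), (1 - 2*s) * g s) + t * (-((1 - 2*t) * g t))) t := by
    have := (hasDerivAt_id t).mul h2
    refine this.congr_deriv ?_
    simp
  have := hA.add hB
  have heq : (-2) * (∫ s in (0:ℝ)..t, s * g s) + (1 - 2*t) * (t * g t)
      + ((∫ s in t..(1/2:ℝ), (1 - 2*s) * g s) + t * (-((1 - 2*t) * g t))) = Kd g t := by
    rw [Kd]; ring
  rw [heq] at this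
  exact this

lemma hasDerivAt_Kd {g : ℝ → ℝ} (hg : Continuous g) (t : ℝ) :
    HasDerivAt (Kd g) (-(g t)) t := by
  have h1 := hd_right hg t
  have h2 := hd_left hg t
  have := (h1.const_mul (-2:ℝ)).add h2
  have heq : (-2:ℝ) * (t * g t) + (-((1 - 2*t) * g t)) = -(g t) := by ring
  rw [heq] at this
  exact this

lemma Kf_zero_eval (g : ℝ → ℝ) : Kf g 0 = 0 := by simp [Kf]

lemma Kf_half_eval (g : ℝ → ℝ) : Kf g (1/2) = 0 := by
  simp [Kf]

/-- Green representation of Bernoulli polynomials. -/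
lemma green (k : ℕ) (t : ℝ) :
    B (2*k+3) t = -(((2*k+3) : ℝ) * ((2*k+2) : ℝ)) * Kf (B (2*k+1)) t := by
  set c : ℝ := ((2*k+3) : ℝ) * ((2*k+2) : ℝ) with hc
  have hcpos : (0:ℝ) < c := by rw [hc]; positivity
  have hcne : c ≠ 0 := ne_of_gt hcpos
  set h : ℝ → ℝ := fun t => Kf (B (2*k+1)) t + (1/c) * B (2*k+3) t with hh
  have hBc : Continuous (B (2*k+1)) := continuous_B _
  set h' : ℝ → ℝ := fun t => Kd (B (2*k+1)) t + (1/c) * ((2*(k:ℝ)+3)) * B (2*k+2) t with hh'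
  have hDh : ∀ t, HasDerivAt h (h' t) t := by
    intro t
    have h2 := (hasDerivAt_B (2*k+3) t).const_mul (1/c)
    have h12 := (hasDerivAt_Kf hBc t).add h2
    have h3 : 2*k+3-1 = 2*k+2 := by omega
    rw [h3] at h12
    refine h12.congr_deriv ?_
    rw [hh']
    push_cast
    ring
  have hDh' : ∀ t, HasDerivAt h' 0 t := by
    intro t
    have h2 := (hasDerivAt_B (2*k+2) t).const_mul ((1/c) * ((2*(k:ℝ)+3)))
    have h12 := (hasDerivAt_Kd hBc t).add h2
    have h3 : 2*k+2-1 = 2*k+1 := by omega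
    rw [h3] at h12
    refine h12.congr_deriv ?_
    rw [hc]
    push_cast
    field_simp
    ring
  have hconst : ∀ s, h' s = h' 0 :=
    fun s => is_const_of_deriv_eq_zero (fun x => (hDh' x).differentiableAt)
      (fun x => (hDh' x).deriv) s 0
  have hlin : ∀ s, h s = h 0 + h' 0 * s := by
    intro s
    have hz : ∀ x, HasDerivAt (fun y => h y - h' 0 * y) 0 x := by
      intro x
      have := (hDh x).sub ((hasDerivAt_id x).const_mul (h' 0))
      refine this.congr_deriv ?_
      simp [hconst x]
    have := is_const_of_deriv_eq_zero (fun x => (hz x).differentiableAt)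
      (fun x => (hz x).deriv) s 0
    linarith
  have hB30 : B (2*k+3) 0 = 0 := B_odd_zero ⟨k+1, by omega⟩ (by omega)
  have hB3h : B (2*k+3) (1/2) = 0 := B_odd_half ⟨k+1, by omega⟩
  have h0 : h 0 = 0 := by
    show Kf (B (2*k+1)) 0 + (1/c) * B (2*k+3) 0 = 0
    rw [Kf_zero_eval, hB30]; ring
  have hhalf : h (1/2) = 0 := by
    show Kf (B (2*k+1)) (1/2) + (1/c) * B (2*k+3) (1/2) = 0
    rw [Kf_half_eval, hB3h]; ring
  clear_value h h'
  have hd0 : h' 0 = 0 := by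
    have := hlin (1/2)
    rw [hhalf, h0] at this
    linarith
  have hzero := hlin t
  rw [h0, hd0] at hzero
  have hker : Kf (B (2*k+1)) t + (1/c) * B (2*k+3) t = 0 := by
    have : h t = 0 := by rw [hzero]; ring
    rw [hh] at this
    exact this
  have : Kf (B (2*k+1)) t = -(1/c) * B (2*k+3) t := by linarith
  rw [this]
  field_simp

noncomputable def Ker (a z : ℝ) : ℝ := min a z * (1 - 2 * max a z)

lemma continuous_ker (a : ℝ) : Continuous (fun z : ℝ => Ker a z) :=
  (continuous_const.min continuous_id).mul
    (continuous_const.sub (continuous_const.mul (continuous_const.max continuous_id)))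

lemma ker_eq_of_le {a z : ℝ} (h : z ≤ a) : Ker a z = z * (1 - 2*a) := by
  rw [Ker, min_eq_right h, max_eq_left h]

lemma ker_eq_of_ge {a z : ℝ} (h : a ≤ z) : Ker a z = a * (1 - 2*z) := by
  rw [Ker, min_eq_left h, max_eq_right h]

lemma ker_tp2 {t₁ t₂ x s : ℝ} (h0 : 0 ≤ t₁) (h12 : t₁ ≤ t₂) (h2 : t₂ ≤ 1/2)
    (hx : 0 ≤ x) (hxs : x ≤ s) (hs : s ≤ 1/2) :
    Ker t₂ x * Ker t₁ s ≤ Ker t₁ x * Ker t₂ s := by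
  rcases le_total s t₁ with h | h
  · rw [ker_eq_of_le (hxs.trans h), ker_eq_of_le h,
      ker_eq_of_le ((hxs.trans h).trans h12), ker_eq_of_le (h.trans h12)]
    ring_nf
    nlinarith [mul_nonneg hx (sub_nonneg.2 h2)]
  · rcases le_total x t₁ with h1 | h1
    · rcases le_total s t₂ with h3 | h3
      · rw [ker_eq_of_le (h1.trans h12), ker_eq_of_ge h, ker_eq_of_le h1, ker_eq_of_le h3]
        have e1 : t₁*(1-2*s) ≤ s*(1-2*t₁) := by nlinarith
        have e2 : (0:ℝ) ≤ x*(1-2*t₂) := mul_nonneg hx (by linarith)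
        nlinarith [mul_le_mul_of_nonneg_left e1 e2]
      · rw [ker_eq_of_le (h1.trans h12), ker_eq_of_ge h, ker_eq_of_le h1, ker_eq_of_ge h3]
        have e1 : t₁*(1-2*t₂) ≤ t₂*(1-2*t₁) := by nlinarith
        have e2 : (0:ℝ) ≤ x*(1-2*s) := mul_nonneg hx (by linarith)
        nlinarith [mul_le_mul_of_nonneg_left e1 e2]
    · rcases le_total x t₂ with h3 | h3
      · rcases le_total s t₂ with h4 | h4
        · rw [ker_eq_of_le h3, ker_eq_of_ge h, ker_eq_of_ge h1, ker_eq_of_le h4]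
          have e1 : x*(1-2*s) ≤ s*(1-2*x) := by nlinarith
          have e2 : (0:ℝ) ≤ t₁*(1-2*t₂) := mul_nonneg h0 (by linarith)
          nlinarith [mul_le_mul_of_nonneg_left e1 e2]
        · rw [ker_eq_of_le h3, ker_eq_of_ge h, ker_eq_of_ge h1, ker_eq_of_ge h4]
          have e1 : x*(1-2*t₂) ≤ t₂*(1-2*x) := by nlinarith
          have e2 : (0:ℝ) ≤ t₁*(1-2*s) := mul_nonneg h0 (by linarith)
          nlinarith [mul_le_mul_of_nonneg_left e1 e2]
      · rw [ker_eq_of_ge h3, ker_eq_of_ge h, ker_eq_of_ge h1, ker_eq_of_ge (h3.trans hxs)]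
        nlinarith [sub_nonneg.2 hs]

lemma Kf_eq_integral {g : ℝ → ℝ} (hg : Continuous g) {t : ℝ} (ht : t ∈ Icc (0:ℝ) (1/2)) :
    Kf g t = ∫ s in (0:ℝ)..(1/2:ℝ), Ker t s * g s := by
  obtain ⟨ht0, ht1⟩ := ht
  have hi1 : IntervalIntegrable (fun s => Ker t s * g s) volume 0 t :=
    ((continuous_ker t).mul hg).intervalIntegrable _ _
  have hi2 : IntervalIntegrable (fun s => Ker t s * g s) volume t (1/2) :=
    ((continuous_ker t).mul hg).intervalIntegrable _ _
  rw [← intervalIntegral.integral_add_adjacent_intervals hi1 hi2]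
  have e1 : ∫ s in (0:ℝ)..t, Ker t s * g s = (1 - 2*t) * ∫ s in (0:ℝ)..t, s * g s := by
    rw [← intervalIntegral.integral_const_mul]
    apply intervalIntegral.integral_congr
    intro z hz
    rw [Set.uIcc_of_le ht0] at hz
    show Ker t z * g z = (1 - 2*t) * (z * g z)
    rw [ker_eq_of_le hz.2]
    ring
  have e2 : ∫ s in t..(1/2:ℝ), Ker t s * g s = t * ∫ s in t..(1/2:ℝ), (1 - 2*s) * g s := by
    rw [← intervalIntegral.integral_const_mul]
    apply intervalIntegral.integral_congr
    intro z hz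
    rw [Set.uIcc_of_le ht1] at hz
    show Ker t z * g z = t * ((1 - 2*z) * g z)
    rw [ker_eq_of_ge hz.1]
    ring
  rw [e1, e2, Kf]

lemma mul_nonneg_of_nonpos_nonpos {a b : ℝ} (ha : a ≤ 0) (hb : b ≤ 0) : 0 ≤ a * b := by
  nlinarith

lemma key {u v : ℝ → ℝ} (hu : Continuous u) (hv : Continuous v)
    (hcross : ∀ x s : ℝ, 0 ≤ x → x ≤ s → s ≤ 1/2 → u s * v x ≤ u x * v s)
    {t₁ t₂ : ℝ} (h0 : 0 ≤ t₁) (h12 : t₁ ≤ t₂) (h2 : t₂ ≤ 1/2) :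
    Kf u t₂ * Kf v t₁ ≤ Kf u t₁ * Kf v t₂ := by
  set μ : Measure ℝ := volume.restrict (Ioc (0:ℝ) (1/2)) with hμ
  have ht1m : t₁ ∈ Icc (0:ℝ) (1/2) := ⟨h0, h12.trans h2⟩
  have ht2m : t₂ ∈ Icc (0:ℝ) (1/2) := ⟨h0.trans h12, h2⟩
  set a : ℝ → ℝ := fun x => Ker t₁ x * u x with ha
  set b : ℝ → ℝ := fun x => Ker t₂ x * v x with hb
  set c : ℝ → ℝ := fun x => Ker t₂ x * u x with hc
  set d : ℝ → ℝ := fun x => Ker t₁ x * v x with hd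
  have hca : Continuous a := (continuous_ker t₁).mul hu
  have hcb : Continuous b := (continuous_ker t₂).mul hv
  have hcc : Continuous c := (continuous_ker t₂).mul hu
  have hcd : Continuous d := (continuous_ker t₁).mul hv
  have hInt : ∀ {f : ℝ → ℝ}, Continuous f → Integrable f μ := by
    intro f hf
    exact hf.integrableOn_Ioc
  have kfa : Kf u t₁ = ∫ x, a x ∂μ := by
    rw [Kf_eq_integral hu ht1m, intervalIntegral.integral_of_le (by norm_num : (0:ℝ) ≤ 1/2)]
  have kfb : Kf v t₂ = ∫ x, b x ∂μ := by
    rw [Kf_eq_integral hv ht2m, intervalIntegral.integral_of_le (by norm_num : (0:ℝ) ≤ 1/2)]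
  have kfc : Kf u t₂ = ∫ x, c x ∂μ := by
    rw [Kf_eq_integral hu ht2m, intervalIntegral.integral_of_le (by norm_num : (0:ℝ) ≤ 1/2)]
  have kfd : Kf v t₁ = ∫ x, d x ∂μ := by
    rw [Kf_eq_integral hv ht1m, intervalIntegral.integral_of_le (by norm_num : (0:ℝ) ≤ 1/2)]
  have hIab : Integrable (fun z : ℝ × ℝ => b z.1 * a z.2) (μ.prod μ) :=
    (hInt hcb).mul_prod (hInt hca)
  have hIdc : Integrable (fun z : ℝ × ℝ => d z.1 * c z.2) (μ.prod μ) :=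
    (hInt hcd).mul_prod (hInt hcc)
  set F : ℝ × ℝ → ℝ := fun z => b z.1 * a z.2 - d z.1 * c z.2 with hF
  have hIF : Integrable F (μ.prod μ) := hIab.sub hIdc
  have hS : Kf v t₂ * Kf u t₁ - Kf v t₁ * Kf u t₂ = ∫ z, F z ∂(μ.prod μ) := by
    rw [hF]
    rw [integral_sub hIab hIdc, MeasureTheory.integral_prod_mul, MeasureTheory.integral_prod_mul,
      kfa, kfb, kfc, kfd]
  have hswap : ∫ z, F z ∂(μ.prod μ) = ∫ z, F z.swap ∂(μ.prod μ) :=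
    (MeasureTheory.integral_prod_swap F).symm
  have hIFs : Integrable (fun z : ℝ × ℝ => F z.swap) (μ.prod μ) := hIF.swap
  have h2S : (∫ z, F z ∂(μ.prod μ)) + (∫ z, F z.swap ∂(μ.prod μ))
      = ∫ z, (F z + F z.swap) ∂(μ.prod μ) := (integral_add hIF hIFs).symm
  have hpt : ∀ z ∈ (Ioc (0:ℝ) (1/2)) ×ˢ (Ioc (0:ℝ) (1/2)), 0 ≤ F z + F z.swap := by
    rintro ⟨s, x⟩ hz
    rw [Set.mem_prod] at hz
    obtain ⟨hsm, hxm⟩ := hz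
    simp only at hsm hxm
    have hfac : F (s, x) + F (s, x).swap =
        (Ker t₁ x * Ker t₂ s - Ker t₂ x * Ker t₁ s) * (u x * v s - u s * v x) := by
      rw [hF]; simp only [Prod.swap, ha, hb, hc, hd]; ring
    rw [hfac]
    rcases le_total x s with hxs | hxs
    · exact mul_nonneg
        (sub_nonneg.2 (ker_tp2 h0 h12 h2 (le_of_lt hxm.1) hxs hsm.2))
        (sub_nonneg.2 (hcross x s (le_of_lt hxm.1) hxs hsm.2))
    · have hk := ker_tp2 h0 h12 h2 (le_of_lt hsm.1) hxs hxm.2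
      have hc2 := hcross s x (le_of_lt hsm.1) hxs hxm.2
      exact mul_nonneg_of_nonpos_nonpos (by linarith) (by linarith)

  have hnn : 0 ≤ ∫ z, (F z + F z.swap) ∂(μ.prod μ) := by
    rw [hμ, MeasureTheory.Measure.prod_restrict]
    exact MeasureTheory.setIntegral_nonneg (measurableSet_Ioc.prod measurableSet_Ioc) hpt
  have : 0 ≤ Kf v t₂ * Kf u t₁ - Kf v t₁ * Kf u t₂ := by
    rw [hS]
    linarith [hswap, h2S, hnn]
  linarith

lemma B_one_eval (t : ℝ) : B 1 t = t - 1/2 := by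
  simp [B, Polynomial.bernoulli, Finset.sum_range_succ, bernoulli_one]
  ring

noncomputable def uu (k : ℕ) (t : ℝ) : ℝ := (-1)^(k+1) * B (2*k+1) t

lemma continuous_uu (k : ℕ) : Continuous (uu k) :=
  continuous_const.mul (continuous_B _)

lemma Kf_const_mul (a : ℝ) (g : ℝ → ℝ) (t : ℝ) :
    Kf (fun s => a * g s) t = a * Kf g t := by
  have h1 : ∀ (x y : ℝ), (∫ s in x..y, s * (a * g s)) = a * ∫ s in x..y, s * g s := by
    intro x y
    rw [← intervalIntegral.integral_const_mul]
    apply intervalIntegral.integral_congr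
    intro z _
    ring
  have h2 : ∀ (x y : ℝ), (∫ s in x..y, (1 - 2*s) * (a * g s)) = a * ∫ s in x..y, (1 - 2*s) * g s := by
    intro x y
    rw [← intervalIntegral.integral_const_mul]
    apply intervalIntegral.integral_congr
    intro z _
    ring
  rw [Kf, Kf, h1, h2]
  ring

lemma uu_rec (k : ℕ) (t : ℝ) :
    uu (k+1) t = (((2*k+3) : ℝ) * ((2*k+2) : ℝ)) * Kf (uu k) t := by
  have : Kf (uu k) t = (-1)^(k+1) * Kf (B (2*k+1)) t := by
    rw [show uu k = fun s => (-1)^(k+1) * B (2*k+1) s from rfl, Kf_const_mul]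
  rw [this, uu, show 2*(k+1)+1 = 2*k+3 from by omega, green k t]
  ring

lemma B_three_eval (t : ℝ) : B 3 t = t^3 - 3/2*t^2 + 1/2*t := by
  have h2 : bernoulli 2 = 1/6 := by
    rw [bernoulli_eq_bernoulli'_of_ne_one (by norm_num), bernoulli'_two]
  have h3 : bernoulli 3 = 0 := by
    rw [bernoulli_eq_bernoulli'_of_ne_one (by norm_num), bernoulli'_three]
  simp [B, Polynomial.bernoulli, Finset.sum_range_succ, bernoulli_one, h2, h3]
  push_cast
  ring

lemma Kf_nonneg {g : ℝ → ℝ} (hge : ∀ s ∈ Icc (0:ℝ) (1/2), 0 ≤ g s)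
    {t : ℝ} (ht : t ∈ Icc (0:ℝ) (1/2)) : 0 ≤ Kf g t := by
  obtain ⟨ht0, ht1⟩ := ht
  have i1 : 0 ≤ ∫ s in (0:ℝ)..t, s * g s := by
    apply intervalIntegral.integral_nonneg ht0
    intro s hs
    exact mul_nonneg hs.1 (hge s ⟨hs.1, hs.2.trans ht1⟩)
  have i2 : 0 ≤ ∫ s in t..(1/2:ℝ), (1 - 2*s) * g s := by
    apply intervalIntegral.integral_nonneg ht1
    intro s hs
    exact mul_nonneg (by linarith [hs.2]) (hge s ⟨ht0.trans hs.1, hs.2⟩)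
  exact add_nonneg (mul_nonneg (by linarith) i1) (mul_nonneg ht0 i2)

lemma Kf_pos {g : ℝ → ℝ} (hg : Continuous g) (hge : ∀ s ∈ Icc (0:ℝ) (1/2), 0 ≤ g s)
    (hgt : ∀ s ∈ Ioo (0:ℝ) (1/2), 0 < g s) {t : ℝ} (ht : t ∈ Ioo (0:ℝ) (1/2)) :
    0 < Kf g t := by
  obtain ⟨ht0, ht1⟩ := ht
  have i1 : 0 < ∫ s in (0:ℝ)..t, s * g s := by
    apply intervalIntegral.intervalIntegral_pos_of_pos_on
      ((continuous_id.mul hg).intervalIntegrable _ _)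
    · intro s hs
      exact mul_pos hs.1 (hgt s ⟨hs.1, hs.2.trans ht1⟩)
    · exact ht0
  have i2 : 0 ≤ ∫ s in t..(1/2:ℝ), (1 - 2*s) * g s := by
    apply intervalIntegral.integral_nonneg ht1.le
    intro s hs
    exact mul_nonneg (by linarith [hs.2]) (hge s ⟨(ht0.le).trans hs.1, hs.2⟩)
  exact add_pos_of_pos_of_nonneg (mul_pos (by linarith) i1) (mul_nonneg ht0.le i2)

lemma uu_zero_eval (t : ℝ) : uu 0 t = 1/2 - t := by
  rw [uu, B_one_eval]
  norm_num

lemma uu_sign (k : ℕ) : (∀ t ∈ Icc (0:ℝ) (1/2), 0 ≤ uu k t) ∧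
    (∀ t ∈ Ioo (0:ℝ) (1/2), 0 < uu k t) := by
  induction k with
  | zero =>
    constructor <;> intro t ht <;> rw [uu_zero_eval]
    · linarith [ht.2]
    · linarith [ht.2]
  | succ k ih =>
    have hc : (0:ℝ) < ((2*k+3) : ℝ) * ((2*k+2) : ℝ) := by positivity
    constructor
    · intro t ht
      rw [uu_rec]
      exact mul_nonneg hc.le (Kf_nonneg ih.1 ht)
    · intro t ht
      rw [uu_rec]
      exact mul_pos hc (Kf_pos (continuous_uu k) ih.1 ih.2 ht)


lemma uu_one_eval (t : ℝ) : uu 1 t = B 3 t := by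
  rw [uu]
  norm_num

lemma uu_cross (k : ℕ) : ∀ x s : ℝ, 0 ≤ x → x ≤ s → s ≤ 1/2 →
    uu k s * uu (k+1) x ≤ uu k x * uu (k+1) s := by
  induction k with
  | zero =>
    intro x s hx hxs hs
    have e : uu 0 x * uu 1 s - uu 0 s * uu 1 x
        = ((1/2-x)*(1/2-s))*((s-x)*(1-s-x)) := by
      rw [uu_zero_eval, uu_zero_eval, uu_one_eval, uu_one_eval, B_three_eval, B_three_eval]
      ring
    have hnn : 0 ≤ ((1/2-x)*(1/2-s))*((s-x)*(1-s-x)) :=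
      mul_nonneg (mul_nonneg (by linarith) (by linarith))
        (mul_nonneg (by linarith) (by linarith))
    linarith [e, hnn]
  | succ k ih =>
    intro x s hx hxs hs
    have hc1 : (0:ℝ) < ((2*k+3) : ℝ) * ((2*k+2) : ℝ) := by positivity
    have hc2 : (0:ℝ) < ((2*(k+1)+3) : ℝ) * ((2*(k+1)+2) : ℝ) := by positivity
    have hk := key (continuous_uu k) (continuous_uu (k+1)) ih hx hxs hs
    rw [uu_rec k, uu_rec k, uu_rec (k+1), uu_rec (k+1)]
    have := mul_le_mul_of_nonneg_left hk (mul_pos hc1 hc2).le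
    push_cast at this ⊢
    nlinarith [this]


lemma B_as_uu (k : ℕ) (t : ℝ) :
    B (2*k+1) t = (-1)^(k+1) * uu k t := by
  rw [uu, ← mul_assoc, ← pow_add]
  rw [Even.neg_one_pow ⟨k+1, by omega⟩, one_mul]

lemma ratio_eq (k : ℕ) (t : ℝ) :
    B (2*k+1) t / B (2*k+3) t = -(uu k t / uu (k+1) t) := by
  have h1 := B_as_uu k t
  have h2 : B (2*k+3) t = (-1)^(k+2) * uu (k+1) t := by
    have := B_as_uu (k+1) t
    rw [show 2*(k+1)+1 = 2*k+3 from by omega] at this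
    exact this
  rw [h1, h2]
  rcases Nat.even_or_odd (k+1) with he | ho
  · rw [Even.neg_one_pow he, Odd.neg_one_pow (by rcases he with ⟨j, hj⟩; exact ⟨j, by omega⟩)]
    rw [one_mul, neg_one_mul, div_neg]
  · rw [Odd.neg_one_pow ho, Even.neg_one_pow (by rcases ho with ⟨j, hj⟩; exact ⟨j+1, by omega⟩)]
    rw [one_mul, neg_one_mul, neg_div]

lemma mono_ratio (k : ℕ) :
    MonotoneOn (fun t : ℝ => B (2*k+1) t / B (2*k+3) t) (Ioo (0:ℝ) (1/2)) := by
  intro x hx y hy hxy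
  simp only
  rw [ratio_eq, ratio_eq]
  have px := (uu_sign (k+1)).2 x hx
  have py := (uu_sign (k+1)).2 y hy
  have hcross := uu_cross k x y hx.1.le hxy hy.2.le
  have : uu k y / uu (k+1) y ≤ uu k x / uu (k+1) x := by
    rw [div_le_div_iff₀ py px]
    exact hcross
  linarith

lemma strict_ratio (k : ℕ) :
    StrictMonoOn (fun t : ℝ => B (2*k+1) t / B (2*k+3) t) (Ioo (0:ℝ) (1/2)) := by
  intro x hx y hy hxy
  rcases lt_or_eq_of_le (mono_ratio k hx hy hxy.le) with h | h
  · exact h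
  exfalso
  -- the ratio is constant on [x, y]
  set c : ℝ := B (2*k+1) x / B (2*k+3) x with hc
  have hconst : ∀ t ∈ Icc x y, B (2*k+1) t / B (2*k+3) t = c := by
    intro t ht
    have htm : t ∈ Ioo (0:ℝ) (1/2) := ⟨hx.1.trans_le ht.1, ht.2.trans_lt hy.2⟩
    have h1 : B (2*k+1) x / B (2*k+3) x ≤ B (2*k+1) t / B (2*k+3) t :=
      mono_ratio k hx htm ht.1
    have h2 : B (2*k+1) t / B (2*k+3) t ≤ B (2*k+1) y / B (2*k+3) y :=
      mono_ratio k htm hy ht.2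
    simp only at h ⊢
    rw [← hc] at h1
    linarith [h1, h2, h.ge, h.le]
  have hB3ne : ∀ t ∈ Ioo (0:ℝ) (1/2), B (2*k+3) t ≠ 0 := by
    intro t ht
    have := (uu_sign (k+1)).2 t ht
    have h2 : B (2*k+3) t = (-1)^(k+2) * uu (k+1) t := by
      have := B_as_uu (k+1) t
      rw [show 2*(k+1)+1 = 2*k+3 from by omega] at this
      exact this
    rw [h2]
    rcases Nat.even_or_odd (k+2) with he | ho
    · rw [Even.neg_one_pow he, one_mul]; exact ne_of_gt this
    · rw [Odd.neg_one_pow ho, neg_one_mul]; exact ne_of_lt (neg_lt_zero.2 this)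
  -- polynomial identity
  set p : Polynomial ℝ := (Polynomial.bernoulli (2*k+1)).map (algebraMap ℚ ℝ)
      - Polynomial.C c * (Polynomial.bernoulli (2*k+3)).map (algebraMap ℚ ℝ) with hp
  have hroot : ∀ t ∈ Icc x y, p.IsRoot t := by
    intro t ht
    have htm : t ∈ Ioo (0:ℝ) (1/2) := ⟨hx.1.trans_le ht.1, ht.2.trans_lt hy.2⟩
    have hne := hB3ne t htm
    have := hconst t ht
    rw [div_eq_iff hne] at this
    rw [Polynomial.IsRoot, hp]
    simp only [Polynomial.eval_sub, Polynomial.eval_mul, Polynomial.eval_C]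
    rw [← B_eq_eval_map, ← B_eq_eval_map, this]
    ring
  have hpz : p = 0 := by
    apply Polynomial.eq_zero_of_infinite_isRoot
    apply Set.Infinite.mono (s := Icc x y)
    · exact fun t ht => hroot t ht
    · exact Set.Icc_infinite hxy
  have hcoeff := congrArg (fun q => Polynomial.coeff q (2*k+3)) hpz
  simp only [hp, Polynomial.coeff_sub, Polynomial.coeff_zero, Polynomial.coeff_C_mul,
    Polynomial.coeff_map] at hcoeff
  rw [bernoulli_coeff_eq_zero (by omega), bernoulli_coeff_self] at hcoeff
  simp at hcoeff
  -- c = 0, so B (2k+1) x = 0, contradicting positivity of uu k x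
  have hBx : B (2*k+1) x = 0 := by
    have := hconst x ⟨le_refl x, hxy.le⟩
    rw [div_eq_iff (hB3ne x hx)] at this
    rw [this, hcoeff]
    ring
  have := (uu_sign k).2 x hx
  rw [B_as_uu] at hBx
  rcases Nat.even_or_odd (k+1) with he | ho
  · rw [Even.neg_one_pow he, one_mul] at hBx; linarith
  · rw [Odd.neg_one_pow ho, neg_one_mul, neg_eq_zero] at hBx; linarith

theorem stmt0 (n : ℕ) (hn : 1 ≤ n) :
    StrictMonoOn (fun t : ℝ => B (2*n-1) t / B (2*n+1) t) (Ioo (0:ℝ) (1/2)) ∧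
    StrictAntiOn (fun t : ℝ => B (2*n-1) t / B (2*n+1) t) (Ioo (1/2:ℝ) 1) := by
  obtain ⟨k, rfl⟩ : ∃ k, n = k + 1 := ⟨n - 1, by omega⟩
  have hidx1 : 2*(k+1)-1 = 2*k+1 := by omega
  have hidx2 : 2*(k+1)+1 = 2*k+3 := by omega
  rw [hidx1, hidx2]
  have hmono := strict_ratio k
  constructor
  · exact hmono
  · -- symmetry
    have hsym : ∀ t : ℝ, B (2*k+1) (1-t) / B (2*k+3) (1-t) = B (2*k+1) t / B (2*k+3) t := by
      intro t
      rw [B_one_sub, B_one_sub, Odd.neg_one_pow ⟨k, by omega⟩, Odd.neg_one_pow ⟨k+1, by omega⟩]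
      rw [neg_one_mul, neg_one_mul, neg_div_neg_eq]
    intro a ha b hb hab
    have h1a : 1 - a ∈ Ioo (0:ℝ) (1/2) := ⟨by linarith [ha.2], by linarith [ha.1]⟩
    have h1b : 1 - b ∈ Ioo (0:ℝ) (1/2) := ⟨by linarith [hb.2], by linarith [hb.1]⟩
    have hlt : (1:ℝ) - b < 1 - a := by linarith
    have := hmono h1b h1a hlt
    simp only at this ⊢
    calc B (2*k+1) b / B (2*k+3) b = B (2*k+1) (1-b) / B (2*k+3) (1-b) := (hsym b).symm
    _ < B (2*k+1) (1-a) / B (2*k+3) (1-a) := this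
    _ = B (2*k+1) a / B (2*k+3) a := hsym a
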